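/- There exists an absolute constant c > 0 with the following property. Let (Z,d) be a finite metric space, let P = {p_1, …, p_m} ⊆ Z with m ≥ 2 and diam(P) > 0, and let n ≥ max(m,4) be a power of two. Let β_1, …, β_m be independent random variables, each distributed with the density f of dist(diam(P), n), and define the random blocks P_i = {x ∈ P \ (P_1 ∪ ⋯ ∪ P_{i−1}) : d(x, p_i) ≤ β_i} for i = 1, …, m. Then for every y ∈ Z and every real r with 0 ≤ r ≤ diam(P)/(16 log₂ n), the expected number of indices i with P_i ∩ B(y,r) ≠ ∅ is at most 1 + c · (r / diam(P)) · log₂ n, where B(y,r) = {z ∈ Z : d(z,y) ≤ r}. -/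

import Mathlib

open MeasureTheory
open scoped Classical

/-- The density `f` of the distribution `dist(δ, k)` where `k = 2^L`. -/
noncomputable def distDensity (δ : ℝ) (L : ℕ) (x : ℝ) : ℝ :=
  if x < δ/8 ∨ δ/4 < x then 0
  else if δ/4 - δ/(8*(L:ℝ)) ≤ x then (8*(L:ℝ)/δ) * (2 / 2^L)
  else (8*(L:ℝ)/δ) * (1/2 : ℝ) ^ ((⌊(x - δ/8) / (δ/(8*(L:ℝ)))⌋).toNat + 1)

private lemma telescope_nat (q : ℕ → ℝ) (N : ℕ) :
    ∑ i ∈ Finset.range N, (1 - q i) * ∏ j ∈ Finset.range i, q j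
      = 1 - ∏ j ∈ Finset.range N, q j := by
  induction N with
  | zero => simp
  | succ n ih => rw [Finset.sum_range_succ, ih, Finset.prod_range_succ]; ring

private lemma withDensity_Ico_le {f : ℝ → ℝ} {a b M : ℝ} (hM : 0 ≤ M)
    (hf : ∀ x ∈ Set.Ico a b, f x ≤ M) :
    (volume.withDensity fun x => ENNReal.ofReal (f x)) (Set.Ico a b)
      ≤ ENNReal.ofReal (M * (b - a)) := by
  rw [withDensity_apply _ measurableSet_Ico]
  calc ∫⁻ x in Set.Ico a b, ENNReal.ofReal (f x) ∂volume
      ≤ ∫⁻ _ in Set.Ico a b, ENNReal.ofReal M ∂volume :=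
        setLIntegral_mono' measurableSet_Ico (fun x hx => ENNReal.ofReal_le_ofReal (hf x hx))
    _ = ENNReal.ofReal M * volume (Set.Ico a b) := setLIntegral_const _ _
    _ = ENNReal.ofReal M * ENNReal.ofReal (b - a) := by rw [Real.volume_Ico]
    _ = ENNReal.ofReal (M * (b - a)) := (ENNReal.ofReal_mul hM).symm

private lemma le_withDensity_Ico {f : ℝ → ℝ} {a b M : ℝ} (hab : a ≤ b)
    (hf : ∀ x ∈ Set.Ico a b, M ≤ f x) :
    ENNReal.ofReal (M * (b - a)) ≤
      (volume.withDensity fun x => ENNReal.ofReal (f x)) (Set.Ico a b) := by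
  rcases le_or_gt M 0 with hM | hM
  · have : M * (b - a) ≤ 0 := mul_nonpos_iff.mpr (Or.inr ⟨hM, by linarith⟩)
    simp [ENNReal.ofReal_eq_zero.mpr this]
  · rw [withDensity_apply _ measurableSet_Ico]
    calc ENNReal.ofReal (M * (b - a))
        = ENNReal.ofReal M * ENNReal.ofReal (b - a) := ENNReal.ofReal_mul hM.le
      _ = ENNReal.ofReal M * volume (Set.Ico a b) := by rw [Real.volume_Ico]
      _ = ∫⁻ _ in Set.Ico a b, ENNReal.ofReal M ∂volume := (setLIntegral_const _ _).symm
      _ ≤ ∫⁻ x in Set.Ico a b, ENNReal.ofReal (f x) ∂volume :=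
        setLIntegral_mono' measurableSet_Ico (fun x hx => ENNReal.ofReal_le_ofReal (hf x hx))

set_option maxHeartbeats 2000000 in
private lemma key_density (δ : ℝ) (hδ : 0 < δ) (L : ℕ) (hL : 2 ≤ L) (r t : ℝ) (hr : 0 ≤ r)
    (hrle : r ≤ δ / (16 * L)) :
    (volume.withDensity fun x => ENNReal.ofReal (distDensity δ L x)) (Set.Ico (t - r) (t + r)) ≤
      ENNReal.ofReal (64 * (r * L / δ)) *
        (volume.withDensity fun x => ENNReal.ofReal (distDensity δ L x)) (Set.Ici (t + r)) +
      ENNReal.ofReal (64 * (r * L / δ) * (1/2 : ℝ) ^ L) := by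
  have hL0 : (0:ℝ) < L := by exact_mod_cast Nat.lt_of_lt_of_le (by norm_num) hL
  set h : ℝ := δ / (8 * (L:ℝ)) with hh_def
  have hh : 0 < h := by rw [hh_def]; positivity
  have h2r : 2 * r ≤ h := by
    have e : δ/(8*(L:ℝ)) = 2*(δ/(16*(L:ℝ))) := by
      field_simp
      ring
    rw [hh_def, e]
    linarith
  have hDh : (8*(L:ℝ)/δ) * h = 1 := by rw [hh_def]; field_simp
  have hquarter : δ/4 = δ/8 + L * h := by rw [hh_def]; field_simp; ring
  have ha : (0:ℝ) ≤ 64 * (r * L / δ) := by positivity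
  clear_value h
  have hD : (0:ℝ) < 8*(L:ℝ)/δ := by positivity
  rcases le_or_gt (t + r) (δ/8) with hc1 | hc1
  · -- case 1 : interval entirely below the support
    have : (volume.withDensity fun x => ENNReal.ofReal (distDensity δ L x))
        (Set.Ico (t - r) (t + r)) ≤ ENNReal.ofReal (0 * ((t+r) - (t-r))) := by
      refine withDensity_Ico_le le_rfl (fun x hx => ?_)
      have : x < δ/8 := lt_of_lt_of_le hx.2 hc1
      rw [distDensity, if_pos (Or.inl this)]
    refine le_trans this ?_
    simp
  rcases lt_or_ge (δ/4 - 3*h) (t - r) with hc2 | hc2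
  · -- case 2 : near the top; use the additive error term
    have hub : ∀ x ∈ Set.Ico (t - r) (t + r),
        distDensity δ L x ≤ (8*(L:ℝ)/δ) * (4 * (1/2:ℝ)^L) := by
      intro x hx
      obtain ⟨hx1, hx2⟩ := hx
      rw [distDensity]
      simp only [← hh_def]
      split_ifs with h1 h2
      · positivity
      · have h2L : (2:ℝ)/2^L = 2*(1/2:ℝ)^L := by
          rw [one_div, inv_pow]
          ring
        rw [h2L]
        have hpos : (0:ℝ) < (1/2:ℝ)^L := by positivity
        exact mul_le_mul_of_nonneg_left (by linarith) hD.le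
      · push_neg at h1
        set n := (⌊(x - δ/8) / h⌋).toNat with hn
        have hfl : (L:ℤ) - 3 ≤ ⌊(x - δ/8) / h⌋ := by
          apply Int.le_floor.mpr
          rw [le_div_iff₀ hh]
          push_cast
          nlinarith [h1.1]
        have hLn : L ≤ n + 3 := by omega
        have hp : (1/2:ℝ)^(n+1) ≤ 4 * (1/2:ℝ)^L := by
          have h1' : (1/2:ℝ)^L ≥ (1/2:ℝ)^(n+3) :=
            pow_le_pow_of_le_one (by norm_num) (by norm_num) hLn
          have h2' : (1/2:ℝ)^(n+3) = (1/2:ℝ)^(n+1) * (1/4) := by ring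
          nlinarith
        exact mul_le_mul_of_nonneg_left hp hD.le
    have := withDensity_Ico_le (by positivity) hub
    refine le_trans this (le_trans (le_of_eq ?_) le_add_self)
    congr 1
    ring
  · -- case 3 : the main geometric case
    have hc3 : t + r ≤ δ/4 - 2*h := by linarith
    obtain ⟨J, hJ1, hJ2⟩ : ∃ J : ℕ, δ/8 + (J:ℝ)*h ≤ t + r ∧ t + r < δ/8 + ((J:ℝ)+1)*h := by
      set ρ : ℝ := (t + r - δ/8)/h with hρdef
      have hρ : 0 < ρ := div_pos (by linarith) hh
      have hfl0 : 0 ≤ ⌊ρ⌋ := Int.floor_nonneg.mpr hρ.le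
      have hJcast : ((⌊ρ⌋.toNat : ℕ):ℝ) = ((⌊ρ⌋:ℤ):ℝ) := by
        exact_mod_cast Int.toNat_of_nonneg hfl0
      refine ⟨⌊ρ⌋.toNat, ?_, ?_⟩
      · have hJρ : ((⌊ρ⌋.toNat : ℕ):ℝ) ≤ ρ := by rw [hJcast]; exact Int.floor_le ρ
        rw [hρdef, le_div_iff₀ hh] at hJρ
        linarith
      · have hρJ : ρ < ((⌊ρ⌋.toNat : ℕ):ℝ) + 1 := by rw [hJcast]; exact Int.lt_floor_add_one ρ
        rw [hρdef, div_lt_iff₀ hh] at hρJ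
        linarith
    -- upper bound for the density on the interval
    have hub : ∀ x ∈ Set.Ico (t - r) (t + r),
        distDensity δ L x ≤ (8*(L:ℝ)/δ) * (1/2:ℝ)^J := by
      intro x hx
      obtain ⟨hx1, hx2⟩ := hx
      have hxlt : x < δ/4 - 2*h := lt_of_lt_of_le hx2 hc3
      rw [distDensity]
      simp only [← hh_def]
      split_ifs with h1 h2
      · positivity
      · exfalso; linarith
      · push_neg at h1
        set n := (⌊(x - δ/8) / h⌋).toNat with hn
        have hfl : (J:ℤ) - 1 ≤ ⌊(x - δ/8) / h⌋ := by
          apply Int.le_floor.mpr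
          rw [le_div_iff₀ hh]
          push_cast
          nlinarith
        have hJn : J ≤ n + 1 := by omega
        have hp : (1/2:ℝ)^(n+1) ≤ (1/2:ℝ)^J :=
          pow_le_pow_of_le_one (by norm_num) (by norm_num) hJn
        exact mul_le_mul_of_nonneg_left hp hD.le
    -- lower bound for the tail
    set a : ℝ := δ/8 + ((J:ℝ)+1)*h with hadef
    clear_value a
    have hJ0 : (0:ℝ) ≤ (J:ℝ) := Nat.cast_nonneg _
    have hlb : ∀ x ∈ Set.Ico a (a + h),
        (8*(L:ℝ)/δ) * (1/2:ℝ)^(J+2) ≤ distDensity δ L x := by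
      intro x hx
      obtain ⟨hx1, hx2⟩ := hx
      have hxl : δ/8 < x := by rw [hadef] at hx1; nlinarith
      have hxu : x < δ/8 + ((J:ℝ)+2)*h := by rw [hadef] at hx2; linarith
      have hxu4 : x ≤ δ/4 := by nlinarith [hJ1]
      rw [distDensity]
      simp only [← hh_def]
      split_ifs with h1 h2
      · exfalso; rcases h1 with h1 | h1 <;> linarith
      · have hLJ : L ≤ J + 2 := by
          have hx' : δ/8 + ((L:ℝ)-1)*h ≤ x := by rw [hquarter] at h2; linarith
          have hlt : (L:ℝ) - 1 < (J:ℝ) + 2 := by nlinarith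
          have hlt2 : L < J + 3 := by exact_mod_cast (by linarith : (L:ℝ) < ((J:ℝ)) + 3)
          omega
        have hp : (1/2:ℝ)^(J+2) ≤ (1/2:ℝ)^L :=
          pow_le_pow_of_le_one (by norm_num) (by norm_num) hLJ
        have h2L : (2:ℝ)/2^L = 2*(1/2:ℝ)^L := by
          rw [one_div, inv_pow]
          ring
        rw [h2L]
        have hpos : (0:ℝ) < (1/2:ℝ)^L := by positivity
        exact mul_le_mul_of_nonneg_left (by linarith) hD.le
      · set n := (⌊(x - δ/8) / h⌋).toNat with hn
        have hflub : ⌊(x - δ/8) / h⌋ < (J:ℤ) + 2 := by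
          apply Int.floor_lt.mpr
          rw [div_lt_iff₀ hh]
          push_cast
          nlinarith
        have hnJ : n + 1 ≤ J + 2 := by omega
        have hp : (1/2:ℝ)^(J+2) ≤ (1/2:ℝ)^(n+1) :=
          pow_le_pow_of_le_one (by norm_num) (by norm_num) hnJ
        exact mul_le_mul_of_nonneg_left hp hD.le
    have hs := withDensity_Ico_le (by positivity) hub
    have htail : ENNReal.ofReal ((1/2:ℝ)^(J+2)) ≤
        (volume.withDensity fun x => ENNReal.ofReal (distDensity δ L x)) (Set.Ici (t + r)) := by
      have h1 : Set.Ico a (a + h) ⊆ Set.Ici (t + r) := fun x hx => le_trans hJ2.le hx.1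
      refine le_trans ?_ (le_trans (le_withDensity_Ico (by linarith) hlb) (measure_mono h1))
      apply le_of_eq
      congr 1
      have : (8*(L:ℝ)/δ) * (1/2:ℝ)^(J+2) * (a + h - a) = (8*(L:ℝ)/δ) * h * (1/2:ℝ)^(J+2) := by
        ring
      rw [this, hDh, one_mul]
    calc (volume.withDensity fun x => ENNReal.ofReal (distDensity δ L x))
          (Set.Ico (t - r) (t + r))
        ≤ ENNReal.ofReal ((8*(L:ℝ)/δ) * (1/2:ℝ)^J * ((t+r) - (t-r))) := hs
      _ = ENNReal.ofReal (64 * (r * L / δ) * (1/2:ℝ)^(J+2)) := by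
          congr 1
          have : (1/2:ℝ)^(J+2) = (1/2:ℝ)^J * (1/4) := by ring
          rw [this]
          ring
      _ = ENNReal.ofReal (64 * (r * L / δ)) * ENNReal.ofReal ((1/2:ℝ)^(J+2)) :=
          ENNReal.ofReal_mul ha
      _ ≤ ENNReal.ofReal (64 * (r * L / δ)) *
            (volume.withDensity fun x => ENNReal.ofReal (distDensity δ L x)) (Set.Ici (t + r)) :=
          mul_le_mul_right htail _
      _ ≤ _ := le_self_add

private lemma pointwise_count {Z : Type} [MetricSpace Z] {m : ℕ} (p : Fin m → Z)
    (P : Set Z) (b : Fin m → ℝ) (Q : Fin m → Set Z)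
    (hQ : ∀ i, Q i = {x | x ∈ P ∧ (∀ j, j < i → x ∉ Q j) ∧ dist x (p i) ≤ b i})
    (y : Z) (r : ℝ) :
    (∑ i : Fin m, if (Q i ∩ Metric.closedBall y r).Nonempty then (1:ℝ) else 0) ≤
      1 + ∑ i : Fin m, (if (b i ∈ Set.Ico (dist (p i) y - r) (dist (p i) y + r) ∧
        ∀ j, j < i → b j < dist (p j) y + r) then (1:ℝ) else 0) := by
  have absorb : ∀ j : Fin m, dist (p j) y + r ≤ b j →
      ∀ x ∈ P, dist x y ≤ r → ∃ j' : Fin m, j' ≤ j ∧ x ∈ Q j' := by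
    intro j hj x hxP hxy
    by_contra hcon
    push_neg at hcon
    have hnot : ∀ j' : Fin m, j' < j → x ∉ Q j' := fun j' hj' => hcon j' hj'.le
    have : x ∈ Q j := by
      rw [hQ]
      refine ⟨hxP, hnot, ?_⟩
      calc dist x (p j) ≤ dist x y + dist y (p j) := dist_triangle _ _ _
        _ = dist x y + dist (p j) y := by rw [dist_comm y (p j)]
        _ ≤ r + dist (p j) y := by linarith
        _ ≤ b j := by linarith
    exact hcon j le_rfl this
  have kill : ∀ j i : Fin m, j < i → dist (p j) y + r ≤ b j →
      ¬(Q i ∩ Metric.closedBall y r).Nonempty := by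
    rintro j i hji hj ⟨x, hxQ, hxB⟩
    rw [hQ] at hxQ
    obtain ⟨hxP, hxnot, -⟩ := hxQ
    obtain ⟨j', hj'le, hj'mem⟩ := absorb j hj x hxP (Metric.mem_closedBall.mp hxB)
    exact hxnot j' (lt_of_le_of_lt hj'le hji) hj'mem
  set T : Finset (Fin m) :=
    Finset.univ.filter (fun i => (Q i ∩ Metric.closedBall y r).Nonempty) with hT
  set G : Finset (Fin m) :=
    Finset.univ.filter (fun i => b i ∈ Set.Ico (dist (p i) y - r) (dist (p i) y + r) ∧
      ∀ j, j < i → b j < dist (p j) y + r) with hG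
  have hsum1 : (∑ i : Fin m, if (Q i ∩ Metric.closedBall y r).Nonempty then (1:ℝ) else 0)
      = (T.card : ℝ) := by rw [hT, Finset.sum_boole]
  have hsum2 : (∑ i : Fin m, (if (b i ∈ Set.Ico (dist (p i) y - r) (dist (p i) y + r) ∧
      ∀ j, j < i → b j < dist (p j) y + r) then (1:ℝ) else 0)) = (G.card : ℝ) := by
    rw [hG, Finset.sum_boole]
  rw [hsum1, hsum2]
  have hcard : T.card ≤ G.card + 1 := by
    have hsplit : (T.filter (fun i => b i < dist (p i) y + r)).card
        + (T.filter (fun i => ¬ b i < dist (p i) y + r)).card = T.card :=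
      Finset.card_filter_add_card_filter_not _
    have h1 : T.filter (fun i => b i < dist (p i) y + r) ⊆ G := by
      intro i hi
      rw [Finset.mem_filter] at hi
      obtain ⟨hiT, hilt⟩ := hi
      rw [hT, Finset.mem_filter] at hiT
      obtain ⟨-, x, hxQ, hxB⟩ := hiT
      have hxQ' := hxQ
      rw [hQ] at hxQ'
      obtain ⟨hxP, -, hxd⟩ := hxQ'
      have hxy : dist x y ≤ r := Metric.mem_closedBall.mp hxB
      have hge : dist (p i) y - r ≤ b i := by
        have : dist (p i) y ≤ dist (p i) x + dist x y := dist_triangle _ _ _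
        have hpx : dist (p i) x = dist x (p i) := dist_comm _ _
        linarith
      rw [hG, Finset.mem_filter]
      refine ⟨Finset.mem_univ _, ⟨hge, hilt⟩, ?_⟩
      intro j hj
      by_contra hcon
      push_neg at hcon
      exact kill j i hj hcon ⟨x, hxQ, hxB⟩
    have h2 : (T.filter (fun i => ¬ b i < dist (p i) y + r)).card ≤ 1 := by
      rw [Finset.card_le_one]
      intro i hi i' hi'
      rw [Finset.mem_filter] at hi hi'
      obtain ⟨hiT, hilt⟩ := hi
      obtain ⟨hi'T, hi'lt⟩ := hi'
      rw [hT, Finset.mem_filter] at hiT hi'T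
      push_neg at hilt hi'lt
      rcases lt_trichotomy i i' with hlt | heq | hgt
      · exact absurd hi'T.2 (kill i i' hlt hilt)
      · exact heq
      · exact absurd hiT.2 (kill i' i hgt hi'lt)
    calc T.card = _ + _ := hsplit.symm
      _ ≤ G.card + 1 := Nat.add_le_add (Finset.card_le_card h1) h2
  have : (T.card : ℝ) ≤ (G.card : ℝ) + 1 := by exact_mod_cast hcard
  linarith

private lemma sum_geom_bound {m : ℕ} (a bb : ℝ) (ha : 0 ≤ a) (hb : 0 ≤ bb)
    (s q : Fin m → ℝ) (hq0 : ∀ i, 0 ≤ q i) (hq1 : ∀ i, q i ≤ 1)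
    (hs0 : ∀ i, 0 ≤ s i) (hs : ∀ i, s i ≤ a * (1 - q i) + bb) :
    ∑ i : Fin m, s i * ∏ j ∈ Finset.Iio i, q j ≤ a + (m:ℝ) * bb := by
  classical
  set qn : ℕ → ℝ := fun n => if h : n < m then q ⟨n, h⟩ else 1 with hqn
  set sn : ℕ → ℝ := fun n => if h : n < m then s ⟨n, h⟩ else 0 with hsn
  have hqn0 : ∀ n, 0 ≤ qn n := by
    intro n; rw [hqn]; dsimp only; split_ifs; exacts [hq0 _, zero_le_one]
  have hqn1 : ∀ n, qn n ≤ 1 := by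
    intro n; rw [hqn]; dsimp only; split_ifs; exacts [hq1 _, le_rfl]
  have hprod : ∀ i : Fin m, ∏ j ∈ Finset.Iio i, q j = ∏ n ∈ Finset.range i.val, qn n := by
    intro i
    rw [← Nat.Iio_eq_range, ← Fin.map_valEmbedding_Iio, Finset.prod_map]
    apply Finset.prod_congr rfl
    intro j _
    simp only [Fin.valEmbedding_apply, hqn]
    rw [dif_pos j.isLt]
  have heq : ∑ i : Fin m, s i * ∏ j ∈ Finset.Iio i, q j
      = ∑ n ∈ Finset.range m, sn n * ∏ j ∈ Finset.range n, qn j := by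
    rw [← Fin.sum_univ_eq_sum_range (fun n => sn n * ∏ j ∈ Finset.range n, qn j) m]
    apply Finset.sum_congr rfl
    intro i _
    rw [hprod i]
    congr 1
    simp only [hsn]
    rw [dif_pos i.isLt]
  rw [heq]
  have hstep : ∀ n ∈ Finset.range m, sn n * ∏ j ∈ Finset.range n, qn j
      ≤ a * ((1 - qn n) * ∏ j ∈ Finset.range n, qn j) + bb := by
    intro n hn
    have hnm : n < m := Finset.mem_range.mp hn
    have hpn : 0 ≤ ∏ j ∈ Finset.range n, qn j := Finset.prod_nonneg (fun j _ => hqn0 j)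
    have hp1 : ∏ j ∈ Finset.range n, qn j ≤ 1 :=
      Finset.prod_le_one (fun j _ => hqn0 j) (fun j _ => hqn1 j)
    have hsnn : sn n ≤ a * (1 - qn n) + bb := by
      simp only [hsn, hqn]; rw [dif_pos hnm, dif_pos hnm]; exact hs _
    have hsn0 : 0 ≤ sn n := by simp only [hsn]; rw [dif_pos hnm]; exact hs0 _
    calc sn n * ∏ j ∈ Finset.range n, qn j
        ≤ (a * (1 - qn n) + bb) * ∏ j ∈ Finset.range n, qn j :=
          mul_le_mul_of_nonneg_right hsnn hpn
      _ = a * ((1 - qn n) * ∏ j ∈ Finset.range n, qn j) + bb * ∏ j ∈ Finset.range n, qn j := by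
          ring
      _ ≤ _ + bb := by nlinarith
  calc ∑ n ∈ Finset.range m, sn n * ∏ j ∈ Finset.range n, qn j
      ≤ ∑ n ∈ Finset.range m, (a * ((1 - qn n) * ∏ j ∈ Finset.range n, qn j) + bb) :=
        Finset.sum_le_sum hstep
    _ = a * (∑ n ∈ Finset.range m, (1 - qn n) * ∏ j ∈ Finset.range n, qn j) + (m:ℝ) * bb := by
        rw [Finset.sum_add_distrib, Finset.sum_const, Finset.card_range, nsmul_eq_mul,
          Finset.mul_sum]
    _ ≤ a * 1 + (m:ℝ) * bb := by
        have htel := telescope_nat qn m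
        have hpm : 0 ≤ ∏ j ∈ Finset.range m, qn j := Finset.prod_nonneg (fun j _ => hqn0 j)
        have hle : ∑ n ∈ Finset.range m, (1 - qn n) * ∏ j ∈ Finset.range n, qn j ≤ 1 := by
          rw [htel]; linarith
        nlinarith
    _ = a + (m:ℝ) * bb := by ring

/-- There is an absolute constant `c > 0` with the following property.  Let
`(Z,d)` be a finite metric space, `P = {p_1, …, p_m} ⊆ Z` with `m ≥ 2` and
`diam(P) > 0`, and let `n = 2^L ≥ max(m,4)` be a power of two.  Let
`β_1, …, β_m` be independent random variables, each with density
`f = distDensity (diam P) L` (the density of `dist(diam P, n)`), and define the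
random blocks `P_i = {x ∈ P \ (P_1 ∪ ⋯ ∪ P_{i-1}) : d(x,p_i) ≤ β_i}`.  Then for
every `y ∈ Z` and every `0 ≤ r ≤ diam(P)/(16 log₂ n)`, the expected number of
indices `i` with `P_i ∩ B(y,r) ≠ ∅` is at most `1 + c·(r/diam P)·log₂ n`. -/
theorem expected_blocks_intersecting_ball_le :
    ∃ c : ℝ, 0 < c ∧
      ∀ (Z : Type) [MetricSpace Z] [Finite Z]
        (m : ℕ) (_ : 2 ≤ m) (p : Fin m → Z) (_ : Function.Injective p)
        (P : Set Z) (_ : P = Set.range p) (_ : 0 < Metric.diam P)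
        (L : ℕ) (_ : 2 ≤ L) (_ : m ≤ 2^L)
        (Ω : Type) [MeasurableSpace Ω] (μ : Measure Ω) [IsProbabilityMeasure μ]
        (β : Fin m → Ω → ℝ) (_ : ∀ i, Measurable (β i))
        (_ : ProbabilityTheory.iIndepFun β μ)
        (_ : ∀ i, Measure.map (β i) μ =
          volume.withDensity (fun x => ENNReal.ofReal (distDensity (Metric.diam P) L x)))
        (Pblk : Fin m → Ω → Set Z)
        (_ : ∀ ω i, Pblk i ω =
          {x | x ∈ P ∧ (∀ j, j < i → x ∉ Pblk j ω) ∧ dist x (p i) ≤ β i ω})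
        (y : Z) (r : ℝ) (_ : 0 ≤ r) (_ : r ≤ Metric.diam P / (16 * (L:ℝ))),
        (∫ ω, (∑ i : Fin m,
            if (Pblk i ω ∩ Metric.closedBall y r).Nonempty then (1:ℝ) else 0) ∂μ)
          ≤ 1 + c * (r / Metric.diam P) * (L:ℝ) := by
  refine ⟨128, by norm_num, ?_⟩
  intro Z _ _ m hm p hp P hPr hdiam L hL hmL Ω _ μ _ β hβm hβi hβlaw Pblk hPblk y r hr hrle
  classical
  set δ := Metric.diam P with hδ
  set ν := volume.withDensity (fun x => ENNReal.ofReal (distDensity δ L x)) with hν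
  -- the events
  set S : Fin m → Fin m → Set ℝ := fun i j =>
    if j = i then Set.Ico (dist (p i) y - r) (dist (p i) y + r)
    else Set.Iio (dist (p j) y + r) with hS
  have hSmeas : ∀ i j, MeasurableSet (S i j) := by
    intro i j
    rw [hS]
    dsimp only
    split_ifs
    exacts [measurableSet_Ico, measurableSet_Iio]
  set A : Fin m → Set Ω := fun i => ⋂ j ∈ Finset.Iic i, (β j) ⁻¹' (S i j) with hA
  have hAmeas : ∀ i, MeasurableSet (A i) := fun i =>
    Finset.measurableSet_biInter _ (fun j _ => (hβm j) (hSmeas i j))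
  have hAmem : ∀ i ω, ω ∈ A i ↔ (β i ω ∈ Set.Ico (dist (p i) y - r) (dist (p i) y + r) ∧
      ∀ j, j < i → β j ω < dist (p j) y + r) := by
    intro i ω
    rw [hA]
    simp only [Set.mem_iInter, Finset.mem_Iic, Set.mem_preimage]
    constructor
    · intro hall
      refine ⟨?_, ?_⟩
      · have h1 := hall i le_rfl
        rw [hS] at h1
        simpa using h1
      · intro j hj
        have h1 := hall j hj.le
        rw [hS] at h1
        dsimp only at h1
        rw [if_neg (Fin.ne_of_lt hj)] at h1
        exact h1
    · rintro ⟨h1, h2⟩ j hj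
      rw [hS]
      dsimp only
      by_cases hji : j = i
      · subst hji; rw [if_pos rfl]; exact h1
      · rw [if_neg hji]
        exact h2 j (lt_of_le_of_ne hj hji)
  -- pointwise bound
  have hpt : ∀ ω, (∑ i : Fin m,
        if (Pblk i ω ∩ Metric.closedBall y r).Nonempty then (1:ℝ) else 0)
      ≤ 1 + ∑ i : Fin m, (A i).indicator (fun _ => (1:ℝ)) ω := by
    intro ω
    refine le_trans (pointwise_count p P (fun i => β i ω) (fun i => Pblk i ω)
      (fun i => hPblk ω i) y r) ?_
    apply add_le_add_right
    apply le_of_eq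
    apply Finset.sum_congr rfl
    intro i _
    rw [Set.indicator_apply]
    exact (if_congr (hAmem i ω).symm rfl rfl)
  -- integrability
  have hint : ∀ i : Fin m, Integrable ((A i).indicator (fun _ => (1:ℝ))) μ :=
    fun i => (integrable_const (1:ℝ)).indicator (hAmeas i)
  have hF : Integrable (fun ω => 1 + ∑ i : Fin m, (A i).indicator (fun _ => (1:ℝ)) ω) μ :=
    (integrable_const 1).add (integrable_finset_sum _ (fun i _ => hint i))
  have hmono : (∫ ω, (∑ i : Fin m,
        if (Pblk i ω ∩ Metric.closedBall y r).Nonempty then (1:ℝ) else 0) ∂μ)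
      ≤ ∫ ω, (1 + ∑ i : Fin m, (A i).indicator (fun _ => (1:ℝ)) ω) ∂μ := by
    refine integral_mono_of_nonneg ?_ hF ?_
    · exact Filter.Eventually.of_forall (fun ω => Finset.sum_nonneg fun i _ => by
        split_ifs <;> norm_num)
    · exact Filter.Eventually.of_forall hpt
  have hcalc : (∫ ω, (1 + ∑ i : Fin m, (A i).indicator (fun _ => (1:ℝ)) ω) ∂μ)
      = 1 + ∑ i : Fin m, (μ (A i)).toReal := by
    rw [integral_add (integrable_const 1) (integrable_finset_sum _ (fun i _ => hint i)),
      integral_const, integral_finset_sum _ (fun i _ => hint i)]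
    simp only [measure_univ, ENNReal.toReal_one, probReal_univ, smul_eq_mul, one_mul]
    congr 1
    apply Finset.sum_congr rfl
    intro i _
    rw [integral_indicator_const (1:ℝ) (hAmeas i), smul_eq_mul, mul_one, Measure.real]
  -- the law of each β i
  have hβν : ∀ j (s : Set ℝ), MeasurableSet s → μ ((β j) ⁻¹' s) = ν s := by
    intro j s hsm
    rw [← Measure.map_apply (hβm j) hsm, hβlaw j]
  have hν1 : ν Set.univ = 1 := by
    have i0 : Fin m := ⟨0, by omega⟩
    rw [← hβν i0 Set.univ MeasurableSet.univ]
    simp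
  have hνfin : ∀ s : Set ℝ, ν s ≠ ⊤ := by
    intro s
    have : ν s ≤ 1 := by rw [← hν1]; exact measure_mono (Set.subset_univ _)
    exact ne_top_of_le_ne_top (by norm_num) this
  -- measure of the events
  have hμA : ∀ i, μ (A i) = ν (Set.Ico (dist (p i) y - r) (dist (p i) y + r)) *
      ∏ j ∈ Finset.Iio i, ν (Set.Iio (dist (p j) y + r)) := by
    intro i
    rw [hA]
    dsimp only
    rw [hβi.meas_biInter (fun j _ => ⟨S i j, hSmeas i j, rfl⟩)]
    rw [Finset.prod_congr rfl (fun j _ => hβν j (S i j) (hSmeas i j))]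
    rw [← Finset.Iio_insert, Finset.prod_insert Finset.notMem_Iio_self]
    congr 1
    · rw [hS]; dsimp only; rw [if_pos rfl]
    · apply Finset.prod_congr rfl
      intro j hj
      rw [hS]
      dsimp only
      rw [if_neg (Fin.ne_of_lt (Finset.mem_Iio.mp hj))]
  -- real-valued quantities
  set q : Fin m → ℝ := fun j => (ν (Set.Iio (dist (p j) y + r))).toReal with hq
  set s : Fin m → ℝ :=
    fun i => (ν (Set.Ico (dist (p i) y - r) (dist (p i) y + r))).toReal with hsdef
  have hq0 : ∀ j, 0 ≤ q j := fun j => ENNReal.toReal_nonneg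
  have hq1 : ∀ j, q j ≤ 1 := by
    intro j
    rw [hq]
    dsimp only
    rw [← ENNReal.toReal_one]
    exact ENNReal.toReal_mono (by norm_num) (by rw [← hν1]; exact measure_mono (Set.subset_univ _))
  have hs0 : ∀ i, 0 ≤ s i := fun i => ENNReal.toReal_nonneg
  have hδpos : (0:ℝ) < δ := hdiam
  have hL0 : (0:ℝ) < L := by exact_mod_cast Nat.lt_of_lt_of_le (by norm_num) hL
  set aa : ℝ := 64 * (r * L / δ) with haa
  have haa0 : 0 ≤ aa := by rw [haa]; positivity
  set bb : ℝ := 64 * (r * L / δ) * (1/2:ℝ)^L with hbb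
  have hbb0 : 0 ≤ bb := by rw [hbb]; positivity
  -- key estimate for each i
  have hkey : ∀ i, s i ≤ aa * (1 - q i) + bb := by
    intro i
    have hk := key_density δ hδpos L hL r (dist (p i) y) hr hrle
    rw [← hν] at hk
    have htails : ν (Set.Iio (dist (p i) y + r)) + ν (Set.Ici (dist (p i) y + r)) = 1 := by
      rw [← measure_union (Set.Iio_disjoint_Ici le_rfl) measurableSet_Ici,
        Set.Iio_union_Ici, hν1]
    have htailreal : (ν (Set.Ici (dist (p i) y + r))).toReal = 1 - q i := by
      have := congrArg ENNReal.toReal htails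
      rw [ENNReal.toReal_add (hνfin _) (hνfin _), ENNReal.toReal_one] at this
      rw [hq]
      dsimp only
      linarith
    have hRHSfin : ENNReal.ofReal (64 * (r * L / δ)) * ν (Set.Ici (dist (p i) y + r))
        + ENNReal.ofReal (64 * (r * L / δ) * (1/2:ℝ)^L) ≠ ⊤ := by
      exact ENNReal.add_ne_top.mpr ⟨ENNReal.mul_ne_top ENNReal.ofReal_ne_top (hνfin _),
        ENNReal.ofReal_ne_top⟩
    have := ENNReal.toReal_mono hRHSfin hk
    rw [ENNReal.toReal_add (ENNReal.mul_ne_top ENNReal.ofReal_ne_top (hνfin _))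
        ENNReal.ofReal_ne_top, ENNReal.toReal_mul, ENNReal.toReal_ofReal (by positivity),
      ENNReal.toReal_ofReal (by positivity), htailreal] at this
    rw [hsdef, haa, hbb]
    dsimp only
    exact this
  -- put everything together
  have hsum : ∑ i : Fin m, (μ (A i)).toReal ≤ aa + (m:ℝ) * bb := by
    have : ∀ i : Fin m, (μ (A i)).toReal = s i * ∏ j ∈ Finset.Iio i, q j := by
      intro i
      rw [hμA i, ENNReal.toReal_mul, ENNReal.toReal_prod]
    rw [Finset.sum_congr rfl (fun i _ => this i)]
    exact sum_geom_bound aa bb haa0 hbb0 s q hq0 hq1 hs0 hkey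
  have hmb : (m:ℝ) * bb ≤ aa := by
    rw [hbb, haa]
    have hm2 : (m:ℝ) ≤ (2:ℝ)^L := by exact_mod_cast hmL
    have hp : (0:ℝ) < (2:ℝ)^L := by positivity
    have h1 : (m:ℝ) * (1/2:ℝ)^L ≤ 1 := by
      rw [one_div, inv_pow]
      rw [mul_inv_le_iff₀ hp] -- (m:ℝ) * (2^L)⁻¹ ≤ 1 ↔ m ≤ 1 * 2^L
      linarith
    nlinarith [mul_nonneg (mul_nonneg hr hL0.le) (le_of_lt hδpos), haa0]
  calc (∫ ω, (∑ i : Fin m,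
        if (Pblk i ω ∩ Metric.closedBall y r).Nonempty then (1:ℝ) else 0) ∂μ)
      ≤ 1 + ∑ i : Fin m, (μ (A i)).toReal := by rw [← hcalc]; exact hmono
    _ ≤ 1 + (aa + (m:ℝ) * bb) := by linarith
    _ ≤ 1 + (aa + aa) := by linarith
    _ = 1 + 128 * (r / δ) * L := by rw [haa]; ring
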